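/- Let G = (V,E) be a graph, and let socw(G) be the second order cutwidth: the minimum over linear arrangements L of the maximum over i of |cut_L(i−1) ∪ cut_L(i)|, where cut_L(i) is the set of edges with exactly one endpoint among the first i vertices of L. Then pathwidth(G') ≤ socw(G), where G' is the incidence-split graph of G (vertices v_u for each incidence, edge {u_v,v_u} per edge of G, and cliques on {v_u : u ~ v} for each v). In particular pathwidth(G') ≤ 2·cutwidth(G) since socw(G) ≤ 2·cutwidth(G). -/

import Mathlib

noncomputable section

attribute [local instance] Classical.propDecidable

/-- `B 0, B 1, ..., B m` is a path decomposition of the graph `G`: every edge is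
covered by some bag, and the bags containing any fixed vertex form a nonempty
contiguous interval of indices. -/
def IsPathDecomp {W : Type*} (G : SimpleGraph W) (m : ℕ) (B : ℕ → Finset W) : Prop :=
  (∀ u v, G.Adj u v → ∃ t ≤ m, u ∈ B t ∧ v ∈ B t) ∧
  (∀ v : W, ∃ i j, i ≤ j ∧ j ≤ m ∧ ∀ t, v ∈ B t ↔ (i ≤ t ∧ t ≤ j))

/-- The pathwidth of a graph: the minimum, over path decompositions, of the
maximum bag size minus one. -/
def pathwidth {W : Type*} (G : SimpleGraph W) : ℕ :=
  sInf {w | ∃ m B, IsPathDecomp G m B ∧ ∀ t, (B t).card ≤ w + 1}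

variable {V : Type*} [DecidableEq V] [Fintype V]

/-- The number of edges of `G` crossing the cut `(S, Sᶜ)`, counted via their
orientation from `S` to `Sᶜ`. -/
def cutSizeSG (G : SimpleGraph V) (S : Finset V) : ℕ :=
  (Finset.univ.filter (fun p : V × V => G.Adj p.1 p.2 ∧ p.1 ∈ S ∧ p.2 ∉ S)).card

/-- The cutwidth of the linear arrangement `L`: the maximum number of edges
crossing any prefix cut of `L`. -/
def cwVal (G : SimpleGraph V) (L : List V) : ℕ :=
  Finset.sup (Finset.range (L.length + 1)) (fun i => cutSizeSG G (L.take i).toFinset)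

/-- The cutwidth of `G`: the minimum cutwidth over all linear arrangements of the
vertices of `G`. -/
def cutwidthSG (G : SimpleGraph V) : ℕ :=
  sInf {n | ∃ L : List V, L.Nodup ∧ (∀ v, v ∈ L) ∧ cwVal G L = n}

/-- The incidence-split graph `G'` of `G`: one vertex `v_u = (v, u)` for each
incidence of a vertex `v` with an edge `{u, v}` of `G`; edges `{u_v, v_u}` for
every edge `{u, v}` of `G`, plus a clique on `{v_u : u ∼ v}` for every vertex `v`. -/
def splitGraph (G : SimpleGraph V) : SimpleGraph {p : V × V // G.Adj p.1 p.2} :=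
  SimpleGraph.fromRel (fun a b =>
    (a.val.1 = b.val.2 ∧ a.val.2 = b.val.1) ∨ a.val.1 = b.val.1)

/-- The set of edges of `G` crossing the cut `(S, Sᶜ)`, oriented from `S` to
`Sᶜ`. -/
def cutSetSG (G : SimpleGraph V) (S : Finset V) : Finset (V × V) :=
  Finset.univ.filter (fun p : V × V => G.Adj p.1 p.2 ∧ p.1 ∈ S ∧ p.2 ∉ S)

/-- The second order cutwidth of the linear arrangement `L`: the maximum, over
`i`, of the number of edges crossing the `(i-1)`-st or the `i`-th prefix cut. -/
def socVal (G : SimpleGraph V) (L : List V) : ℕ :=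
  Finset.sup (Finset.range (L.length + 1)) (fun i =>
    (cutSetSG G (L.take i).toFinset ∪ cutSetSG G (L.take (i + 1)).toFinset).card)

/-- The second order cutwidth of `G`: the minimum over all linear arrangements. -/
def socw (G : SimpleGraph V) : ℕ :=
  sInf {n | ∃ L : List V, L.Nodup ∧ (∀ v, v ∈ L) ∧ socVal G L = n}

namespace SocwAux

lemma mem_take_iff_indexOf {α} [DecidableEq α] (L : List α) (x : α) (k : ℕ) :
    x ∈ L.take k ↔ L.idxOf x < k ∧ x ∈ L := by
  induction L generalizing k with
  | nil => simp
  | cons a l ih =>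
    cases k with
    | zero => simp
    | succ k =>
      by_cases h : x = a
      · subst h; simp [List.idxOf_cons_self]
      · simp [List.take_succ_cons, h, List.idxOf_cons_ne _ (Ne.symm h), ih,
          Nat.succ_lt_succ_iff]

lemma arith1 {a b n : ℕ} (hab : a < b) (hb : b < n) : a * (n+1) + 1 + b ≤ b * (n+1) := by
  nlinarith

lemma rep_unique {a b a' b' n : ℕ} (hb : b < n+1) (hb' : b' < n+1)
    (h : a * (n+1) + b = a' * (n+1) + b') : a = a' ∧ b = b' := by
  have e1 : (a * (n+1) + b) / (n+1) = a := by
    rw [show a * (n+1) + b = b + (n+1) * a by ring,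
      Nat.add_mul_div_left _ _ (Nat.succ_pos n), Nat.div_eq_of_lt hb, zero_add]
  have e2 : (a' * (n+1) + b') / (n+1) = a' := by
    rw [show a' * (n+1) + b' = b' + (n+1) * a' by ring,
      Nat.add_mul_div_left _ _ (Nat.succ_pos n), Nat.div_eq_of_lt hb', zero_add]
  have ha : a = a' := by rw [← e1, ← e2, h]
  subst ha
  exact ⟨rfl, Nat.add_left_cancel h⟩


/-- Lower end of the bag interval of a split vertex. -/
def slo (G : SimpleGraph V) (L : List V) (s : {p : V × V // G.Adj p.1 p.2}) : ℕ :=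
  if L.idxOf s.val.1 < L.idxOf s.val.2 then L.idxOf s.val.1 * (L.length + 1)
  else L.idxOf s.val.2 * (L.length + 1) + 1 + L.idxOf s.val.1

/-- Upper end of the bag interval of a split vertex. -/
def shi (G : SimpleGraph V) (L : List V) (s : {p : V × V // G.Adj p.1 p.2}) : ℕ :=
  if L.idxOf s.val.1 < L.idxOf s.val.2 then
    L.idxOf s.val.1 * (L.length + 1) + 1 + L.idxOf s.val.2
  else L.idxOf s.val.1 * (L.length + 1)

/-- The bags of the path decomposition. -/
def bag (G : SimpleGraph V) (L : List V) (t : ℕ) : Finset {p : V × V // G.Adj p.1 p.2} :=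
  Finset.univ.filter (fun s => slo G L s ≤ t ∧ t ≤ shi G L s)

lemma mem_bag {G : SimpleGraph V} {L : List V} {t : ℕ} {s : {p : V × V // G.Adj p.1 p.2}} :
    s ∈ bag G L t ↔ slo G L s ≤ t ∧ t ≤ shi G L s := by
  simp [bag]

lemma idx_lt {L : List V} (hmem : ∀ v, v ∈ L) (v : V) : L.idxOf v < L.length :=
  List.idxOf_lt_length_iff.2 (hmem v)

lemma idx_ne {G : SimpleGraph V} {L : List V} (hmem : ∀ v, v ∈ L)
    (s : {p : V × V // G.Adj p.1 p.2}) : L.idxOf s.val.1 ≠ L.idxOf s.val.2 :=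
  fun h => (G.ne_of_adj s.2) ((List.idxOf_inj (hmem _)).1 h)

lemma lo_le_hi {G : SimpleGraph V} {L : List V} (hmem : ∀ v, v ∈ L)
    (s : {p : V × V // G.Adj p.1 p.2}) : slo G L s ≤ shi G L s := by
  unfold slo shi
  rcases lt_or_gt_of_ne (idx_ne hmem s) with hlt | hgt
  · simp only [if_pos hlt]; omega
  · simp only [if_neg (not_lt_of_gt hgt)]
    exact arith1 hgt (idx_lt hmem _)

lemma hi_le {G : SimpleGraph V} {L : List V} (hmem : ∀ v, v ∈ L)
    (s : {p : V × V // G.Adj p.1 p.2}) : shi G L s ≤ L.length * (L.length + 1) := by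
  unfold shi
  have h1 := idx_lt hmem s.val.1
  have h2 := idx_lt hmem s.val.2
  rcases lt_or_gt_of_ne (idx_ne hmem s) with hlt | hgt
  · simp only [if_pos hlt]; nlinarith
  · simp only [if_neg (not_lt_of_gt hgt)]
    exact Nat.mul_le_mul_right _ (le_of_lt h1)

lemma mem_bag_self {G : SimpleGraph V} {L : List V} (hmem : ∀ v, v ∈ L)
    (s : {p : V × V // G.Adj p.1 p.2}) :
    s ∈ bag G L (L.idxOf s.val.1 * (L.length + 1)) := by
  rw [mem_bag]; unfold slo shi
  rcases lt_or_gt_of_ne (idx_ne hmem s) with hlt | hgt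
  · simp only [if_pos hlt]; omega
  · simp only [if_neg (not_lt_of_gt hgt)]
    exact ⟨arith1 hgt (idx_lt hmem _), le_refl _⟩

lemma sender_mem_handover {G : SimpleGraph V} {L : List V}
    (s : {p : V × V // G.Adj p.1 p.2}) (h : L.idxOf s.val.1 < L.idxOf s.val.2) :
    s ∈ bag G L (L.idxOf s.val.1 * (L.length + 1) + 1 + L.idxOf s.val.2) := by
  rw [mem_bag]; unfold slo shi
  simp only [if_pos h]; omega

lemma receiver_mem_handover {G : SimpleGraph V} {L : List V} (hmem : ∀ v, v ∈ L)
    (s : {p : V × V // G.Adj p.1 p.2}) (h : L.idxOf s.val.2 < L.idxOf s.val.1) :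
    s ∈ bag G L (L.idxOf s.val.2 * (L.length + 1) + 1 + L.idxOf s.val.1) := by
  rw [mem_bag]; unfold slo shi
  simp only [if_neg (not_lt_of_gt h)]
  exact ⟨le_refl _, arith1 h (idx_lt hmem _)⟩


lemma decomp {G : SimpleGraph V} {L : List V} (hmem : ∀ v, v ∈ L) :
    IsPathDecomp (splitGraph G) (L.length * (L.length + 1)) (bag G L) := by
  constructor
  · intro u v huv
    rw [splitGraph, SimpleGraph.fromRel_adj] at huv
    obtain ⟨hne, hrel⟩ := huv
    have hm : ∀ w : V, L.idxOf w * (L.length + 1) ≤ L.length * (L.length + 1) :=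
      fun w => Nat.mul_le_mul_right _ (le_of_lt (idx_lt hmem w))
    have hswap : ∀ u v : {p : V × V // G.Adj p.1 p.2}, u.val.1 = v.val.2 → u.val.2 = v.val.1 →
        ∃ t ≤ L.length * (L.length + 1), u ∈ bag G L t ∧ v ∈ bag G L t := by
      intro u v h1 h2
      rcases lt_or_gt_of_ne (idx_ne hmem u) with hlt | hgt
      · refine ⟨L.idxOf u.val.1 * (L.length + 1) + 1 + L.idxOf u.val.2,
          le_trans (le_of_eq ?_) (hi_le hmem u), sender_mem_handover u hlt, ?_⟩
        · unfold shi; rw [if_pos hlt]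
        · have hv := receiver_mem_handover hmem v (by rw [← h1, ← h2]; exact hlt)
          rwa [← h1, ← h2] at hv
      · refine ⟨L.idxOf u.val.2 * (L.length + 1) + 1 + L.idxOf u.val.1,
          ?_, receiver_mem_handover hmem u hgt, ?_⟩
        · have := hi_le hmem v
          unfold shi at this
          rw [if_pos (by rw [← h1, ← h2]; exact hgt), ← h1, ← h2] at this
          exact this
        · have hv := sender_mem_handover v (by rw [← h1, ← h2]; exact hgt)
          rwa [← h1, ← h2] at hv
    rcases hrel with (⟨h1, h2⟩ | h1) | (⟨h1, h2⟩ | h1)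
    · exact hswap u v h1 h2
    · refine ⟨L.idxOf u.val.1 * (L.length + 1), hm _, mem_bag_self hmem u, ?_⟩
      have := mem_bag_self hmem v
      rwa [← h1] at this
    · obtain ⟨t, ht, h3, h4⟩ := hswap v u h1 h2
      exact ⟨t, ht, h4, h3⟩
    · refine ⟨L.idxOf u.val.1 * (L.length + 1), hm _, mem_bag_self hmem u, ?_⟩
      have := mem_bag_self hmem v
      rwa [h1] at this
  · intro s
    exact ⟨slo G L s, shi G L s, lo_le_hi hmem s, hi_le hmem s, fun t => mem_bag⟩

lemma bag_card_le {G : SimpleGraph V} {L : List V} (hmem : ∀ v, v ∈ L) (t : ℕ) :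
    (bag G L t).card ≤ socVal G L + 1 := by
  rcases Finset.eq_empty_or_nonempty (bag G L t) with h0 | ⟨s₀, hs₀⟩
  · simp [h0]
  set i := t / (L.length + 1) with hidef
  have npos : 0 < L.length + 1 := Nat.succ_pos L.length
  have bound : ∀ s ∈ bag G L t,
      min (L.idxOf s.val.1) (L.idxOf s.val.2) ≤ i ∧
      i ≤ max (L.idxOf s.val.1) (L.idxOf s.val.2) := by
    intro s hs
    rw [mem_bag] at hs
    unfold slo shi at hs
    rcases lt_or_gt_of_ne (idx_ne hmem s) with hlt | hgt
    · rw [if_pos hlt, if_pos hlt] at hs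
      have hb : L.idxOf s.val.2 < L.length := idx_lt hmem _
      have h3 : L.idxOf s.val.1 ≤ i := (Nat.le_div_iff_mul_le npos).2 hs.1
      have h4 : i < L.idxOf s.val.1 + 1 :=
        (Nat.div_lt_iff_lt_mul npos).2 (by nlinarith [hs.2])
      omega
    · rw [if_neg (not_lt_of_gt hgt), if_neg (not_lt_of_gt hgt)] at hs
      have h3 : L.idxOf s.val.2 ≤ i :=
        (Nat.le_div_iff_mul_le npos).2 (by omega)
      have h4 : i < L.idxOf s.val.1 + 1 :=
        (Nat.div_lt_iff_lt_mul npos).2 (by nlinarith [hs.2])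
      omega
  have hin : i < L.length + 1 := by
    obtain ⟨hmin, hmax⟩ := bound s₀ hs₀
    have g1 := idx_lt hmem s₀.val.1
    have g2 := idx_lt hmem s₀.val.2
    omega
  set C := cutSetSG G (L.take i).toFinset ∪ cutSetSG G (L.take (i + 1)).toFinset with hC
  have hCle : C.card ≤ socVal G L :=
    Finset.le_sup (f := fun k =>
      (cutSetSG G (L.take k).toFinset ∪ cutSetSG G (L.take (k + 1)).toFinset).card)
      (Finset.mem_range.2 hin)
  set D := (bag G L t).filter (fun s => L.idxOf s.val.1 < L.idxOf s.val.2 ∧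
    L.idxOf s.val.1 * (L.length + 1) + 1 + L.idxOf s.val.2 = t) with hD
  have hDsub : D ⊆ bag G L t := Finset.filter_subset _ _
  have hD1 : D.card ≤ 1 := by
    rw [Finset.card_le_one]
    intro s hs s' hs'
    simp only [hD, Finset.mem_filter] at hs hs'
    obtain ⟨-, hlt, he⟩ := hs
    obtain ⟨-, hlt', he'⟩ := hs'
    have hb : L.idxOf s.val.2 < L.length := idx_lt hmem _
    have hb' : L.idxOf s'.val.2 < L.length := idx_lt hmem _
    have key := rep_unique (n := L.length) (a := L.idxOf s.val.1) (b := 1 + L.idxOf s.val.2)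
      (a' := L.idxOf s'.val.1) (b' := 1 + L.idxOf s'.val.2)
      (by omega) (by omega) (by omega)
    have e1 : s.val.1 = s'.val.1 := (List.idxOf_inj (hmem _)).1 key.1
    have e2 : s.val.2 = s'.val.2 := (List.idxOf_inj (hmem _)).1 (by omega)
    exact Subtype.ext (Prod.ext e1 e2)
  set φ : {p : V × V // G.Adj p.1 p.2} → V × V := fun s =>
    if L.idxOf s.val.1 < L.idxOf s.val.2 then s.val else s.val.swap with hφ
  have hmapsto : ∀ s ∈ bag G L t \ D, φ s ∈ C := by
    intro s hs
    have hsb := (Finset.mem_sdiff.1 hs).1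
    obtain ⟨hmin, hmax⟩ := bound s hsb
    rcases lt_or_gt_of_ne (idx_ne hmem s) with hlt | hgt
    · -- φ s = s.val, a = idx s.1 < b = idx s.2
      have hφs : φ s = s.val := by rw [hφ]; exact if_pos hlt
      rw [min_eq_left (le_of_lt hlt)] at hmin
      rw [max_eq_right (le_of_lt hlt)] at hmax
      rw [hφs, hC]
      rcases Nat.lt_or_ge (L.idxOf s.val.1) i with ha | ha
      · apply Finset.mem_union_left
        simp only [cutSetSG, Finset.mem_filter, Finset.mem_univ, true_and]
        refine ⟨s.2, ?_, ?_⟩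
        · rw [List.mem_toFinset, mem_take_iff_indexOf]
          exact ⟨ha, hmem _⟩
        · rw [List.mem_toFinset, mem_take_iff_indexOf]
          rintro ⟨hc, -⟩; omega
      · apply Finset.mem_union_right
        simp only [cutSetSG, Finset.mem_filter, Finset.mem_univ, true_and]
        refine ⟨s.2, ?_, ?_⟩
        · rw [List.mem_toFinset, mem_take_iff_indexOf]
          exact ⟨by omega, hmem _⟩
        · rw [List.mem_toFinset, mem_take_iff_indexOf]
          rintro ⟨hc, -⟩; omega
    · -- φ s = swap, a = idx s.2 < b = idx s.1
      have hφs : φ s = s.val.swap := by rw [hφ]; exact if_neg (not_lt_of_gt hgt)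
      rw [min_eq_right (le_of_lt hgt)] at hmin
      rw [max_eq_left (le_of_lt hgt)] at hmax
      rw [hφs, hC]
      rcases Nat.lt_or_ge (L.idxOf s.val.2) i with ha | ha
      · apply Finset.mem_union_left
        simp only [cutSetSG, Finset.mem_filter, Finset.mem_univ, true_and, Prod.fst_swap,
          Prod.snd_swap]
        refine ⟨s.2.symm, ?_, ?_⟩
        · rw [List.mem_toFinset, mem_take_iff_indexOf]
          exact ⟨ha, hmem _⟩
        · rw [List.mem_toFinset, mem_take_iff_indexOf]
          rintro ⟨hc, -⟩; omega
      · apply Finset.mem_union_right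
        simp only [cutSetSG, Finset.mem_filter, Finset.mem_univ, true_and, Prod.fst_swap,
          Prod.snd_swap]
        refine ⟨s.2.symm, ?_, ?_⟩
        · rw [List.mem_toFinset, mem_take_iff_indexOf]
          exact ⟨by omega, hmem _⟩
        · rw [List.mem_toFinset, mem_take_iff_indexOf]
          rintro ⟨hc, -⟩; omega
  have hinj : Set.InjOn φ ↑(bag G L t \ D) := by
    intro s hs s' hs' hφe
    simp only [Finset.coe_sdiff, Set.mem_diff, Finset.mem_coe] at hs hs'
    have key : ∀ x y : {p : V × V // G.Adj p.1 p.2},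
        x ∈ bag G L t → x ∉ D → y ∈ bag G L t →
        L.idxOf x.val.1 < L.idxOf x.val.2 → L.idxOf y.val.2 < L.idxOf y.val.1 →
        x.val = y.val.swap → False := by
      intro x y hxb hxd hyb hxlt hygt hxy
      have e1 : x.val.1 = y.val.2 := by rw [hxy]; exact Prod.fst_swap
      have e2 : x.val.2 = y.val.1 := by rw [hxy]; exact Prod.snd_swap
      have hxb2 := hxb
      rw [mem_bag] at hxb2 hyb
      unfold slo shi at hxb2 hyb
      rw [if_pos hxlt, if_pos hxlt] at hxb2
      rw [if_neg (not_lt_of_gt hygt), if_neg (not_lt_of_gt hygt)] at hyb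
      rw [← e1, ← e2] at hyb
      have ht : L.idxOf x.val.1 * (L.length + 1) + 1 + L.idxOf x.val.2 = t :=
        le_antisymm hyb.1 hxb2.2
      exact hxd (Finset.mem_filter.2 ⟨hxb, hxlt, ht⟩)
    rcases lt_or_gt_of_ne (idx_ne hmem s) with h1 | h1 <;>
      rcases lt_or_gt_of_ne (idx_ne hmem s') with h2 | h2
    · rw [hφ] at hφe
      simp only [if_pos h1, if_pos h2] at hφe
      exact Subtype.ext hφe
    · exfalso
      rw [hφ] at hφe
      simp only [if_pos h1, if_neg (not_lt_of_gt h2)] at hφe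
      exact key s s' hs.1 hs.2 hs'.1 h1 h2 hφe
    · exfalso
      rw [hφ] at hφe
      simp only [if_neg (not_lt_of_gt h1), if_pos h2] at hφe
      exact key s' s hs'.1 hs'.2 hs.1 h2 h1 hφe.symm
    · rw [hφ] at hφe
      simp only [if_neg (not_lt_of_gt h1), if_neg (not_lt_of_gt h2)] at hφe
      exact Subtype.ext (Prod.swap_injective hφe)
  have h5 : (bag G L t \ D).card ≤ C.card :=
    Finset.card_le_card_of_injOn φ hmapsto hinj
  have h6 : (bag G L t \ D).card + D.card = (bag G L t).card :=
    Finset.card_sdiff_add_card_eq_card hDsub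
  omega

lemma socVal_le_two_cw {G : SimpleGraph V} {L : List V} (hmem : ∀ v, v ∈ L) :
    socVal G L ≤ 2 * cwVal G L := by
  apply Finset.sup_le
  intro k hk
  refine le_trans (Finset.card_union_le _ _) ?_
  have h1 : (cutSetSG G (L.take k).toFinset).card ≤ cwVal G L :=
    Finset.le_sup (f := fun i => cutSizeSG G (L.take i).toFinset) hk
  have h2 : (cutSetSG G (L.take (k + 1)).toFinset).card ≤ cwVal G L := by
    rcases Nat.lt_or_ge k L.length with hk' | hk'
    · exact Finset.le_sup (f := fun i => cutSizeSG G (L.take i).toFinset)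
        (Finset.mem_range.2 (by omega))
    · have he : L.take (k + 1) = L := List.take_of_length_le (by omega)
      rw [he]
      have : cutSetSG G L.toFinset = ∅ := by
        ext p
        simp [cutSetSG, List.mem_toFinset, hmem]
      simp [this]
  omega

end SocwAux
/-- `pathwidth(G') ≤ socw(G)`, and in particular `pathwidth(G') ≤ 2 · cutwidth(G)`
since `socw(G) ≤ 2 · cutwidth(G)`. -/
theorem pathwidth_split_le_socw (G : SimpleGraph V) :
    pathwidth (splitGraph G) ≤ socw G ∧
      socw G ≤ 2 * cutwidthSG G ∧
      pathwidth (splitGraph G) ≤ 2 * cutwidthSG G := by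
  have hL0 : ∃ L : List V, L.Nodup ∧ ∀ v, v ∈ L :=
    ⟨Finset.univ.toList, Finset.nodup_toList _, fun v => (Finset.mem_toList).2 (Finset.mem_univ v)⟩
  obtain ⟨L0, hnd0, hmem0⟩ := hL0
  have hsocne : {n | ∃ L : List V, L.Nodup ∧ (∀ v, v ∈ L) ∧ socVal G L = n}.Nonempty :=
    ⟨socVal G L0, L0, hnd0, hmem0, rfl⟩
  have hcwne : {n | ∃ L : List V, L.Nodup ∧ (∀ v, v ∈ L) ∧ cwVal G L = n}.Nonempty :=
    ⟨cwVal G L0, L0, hnd0, hmem0, rfl⟩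
  have hpw : ∀ L : List V, (∀ v, v ∈ L) → pathwidth (splitGraph G) ≤ socVal G L := by
    intro L hmem
    exact Nat.sInf_le ⟨L.length * (L.length + 1), SocwAux.bag G L, SocwAux.decomp hmem,
      SocwAux.bag_card_le hmem⟩
  have h1 : pathwidth (splitGraph G) ≤ socw G := by
    obtain ⟨L1, hnd1, hmem1, hval1⟩ := Nat.sInf_mem hsocne
    calc pathwidth (splitGraph G) ≤ socVal G L1 := hpw L1 hmem1
      _ = socw G := hval1
  have h2 : socw G ≤ 2 * cutwidthSG G := by
    obtain ⟨L2, hnd2, hmem2, hval2⟩ := Nat.sInf_mem hcwne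
    calc socw G ≤ socVal G L2 := Nat.sInf_le ⟨L2, hnd2, hmem2, rfl⟩
      _ ≤ 2 * cwVal G L2 := SocwAux.socVal_le_two_cw hmem2
      _ = 2 * cutwidthSG G := by rw [hval2]; rfl
  exact ⟨h1, h2, h1.trans h2⟩
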